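/- arXiv:2510.20689 — 6 statements merged into one kernel-verified Lean document; each statement's English description precedes it below -/
import Mathlib

section
/- Let K be a commutative Q-algebra and A an n×n matrix over K such that Tr(A^i) = 0 for every i ∈ {1, 2, ..., n}. Then the characteristic polynomial of A equals t^n. -/
open Polynomial Matrix Finset

private lemma toMatrix_pow {R M ι : Type*} [CommRing R] [AddCommGroup M] [Module R M]
    [Fintype ι] [DecidableEq ι] (b : Module.Basis ι R M) (f : Module.End R M) (k : ℕ) :
    LinearMap.toMatrix b b (f ^ k) = (LinearMap.toMatrix b b f) ^ k := by
  induction k with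
  | zero => simp [pow_zero, LinearMap.toMatrix_one]
  | succ k ih =>
      rw [pow_succ, pow_succ, Module.End.mul_eq_comp, LinearMap.toMatrix_comp b b b, ih]

private lemma trace_pow_eq_sum_pow_roots (F : Type) [Field F] [IsAlgClosed F] :
    ∀ (n : ℕ) (B : Matrix (Fin n) (Fin n) F) (k : ℕ),
      Matrix.trace (B ^ k) = ((Matrix.charpoly B).roots.map (· ^ k)).sum := by
  intro n
  induction n with
  | zero =>
      intro B k
      have h1 : B.charpoly = 1 := by
        rw [Matrix.charpoly]; exact Matrix.det_isEmpty
      rw [h1]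
      simp [Matrix.trace]
  | succ m ih =>
      intro B k
      classical
      set f := Matrix.toLin' B with hf
      obtain ⟨μ, hμ⟩ := Module.End.exists_eigenvalue f
      obtain ⟨v, hv⟩ := hμ.exists_hasEigenvector
      have hv0 : v ≠ 0 := hv.right
      have li : LinearIndepOn F (id : (Fin (m+1) → F) → (Fin (m+1) → F)) {v} :=
        LinearIndepOn.singleton hv0
      set b' : Module.Basis _ F (Fin (m+1) → F) := Module.Basis.extend li with hb'
      have hvt : v ∈ li.extend (Set.subset_univ _) := li.subset_extend _ rfl
      haveI : Fintype (li.extend (Set.subset_univ _)) := FiniteDimensional.fintypeBasisIndex b'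
      have hcard : Fintype.card (li.extend (Set.subset_univ _)) = m + 1 := by
        rw [← Module.finrank_eq_card_basis b', Module.finrank_fin_fun]
      let e0 : Fin (m+1) ≃ _ := (Fintype.equivFinOfCardEq hcard).symm
      let e : Fin (m+1) ≃ _ := e0.trans (Equiv.swap (e0 0) ⟨v, hvt⟩)
      have he0 : e 0 = ⟨v, hvt⟩ := by simp [e, Equiv.swap_apply_left]
      set b : Module.Basis (Fin (m+1)) F (Fin (m+1) → F) := b'.reindex e.symm with hb
      have hb0 : b 0 = v := by
        rw [hb, Module.Basis.reindex_apply, Equiv.symm_symm, he0]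
        exact Module.Basis.extend_apply_self li ⟨v, hvt⟩
      set M : Matrix (Fin (m+1)) (Fin (m+1)) F := LinearMap.toMatrix b b f with hM
      -- charpoly M = charpoly B
      have hchareq : M.charpoly = B.charpoly := by
        have h1 := LinearMap.charpoly_toMatrix f b
        have h2 := LinearMap.charpoly_toMatrix f (Pi.basisFun F (Fin (m+1)))
        rw [LinearMap.toMatrix_eq_toMatrix', hf, LinearMap.toMatrix'_toLin'] at h2
        rw [hM, h1, ← h2]
      -- traces agree
      have htreq : ∀ j : ℕ, Matrix.trace (M ^ j) = Matrix.trace (B ^ j) := by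
        intro j
        have h1 : Matrix.trace (M ^ j) = LinearMap.trace F _ (f ^ j) := by
          rw [hM, ← toMatrix_pow b f j, ← LinearMap.trace_eq_matrix_trace]
        have h2 : Matrix.trace (B ^ j) = LinearMap.trace F _ (f ^ j) := by
          have h3 : B = LinearMap.toMatrix (Pi.basisFun F (Fin (m+1)))
              (Pi.basisFun F (Fin (m+1))) f := by
            rw [LinearMap.toMatrix_eq_toMatrix', hf, LinearMap.toMatrix'_toLin']
          rw [h3, ← toMatrix_pow _ f j, ← LinearMap.trace_eq_matrix_trace]
        rw [h1, h2]
      -- column structure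
      have hM0 : ∀ i, M i 0 = if i = 0 then μ else 0 := by
        intro i
        have hfb : f (b 0) = μ • b 0 := by rw [hb0]; exact hv.apply_eq_smul
        rw [hM, LinearMap.toMatrix_apply, hfb]
        simp [Module.Basis.repr_self, Finsupp.single_apply, eq_comm]
      have hM00 : M 0 0 = μ := by simpa using hM0 0
      set D : Matrix (Fin m) (Fin m) F := Matrix.of (fun i j => M i.succ j.succ) with hD
      have hpowM : ∀ j : ℕ, (∀ i, (M ^ j) i 0 = if i = 0 then μ ^ j else 0) ∧
          (∀ i l, (M ^ j) i.succ l.succ = (D ^ j) i l) := by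
        intro j
        induction j with
        | zero =>
            refine ⟨fun i => by simp [Matrix.one_apply], fun i l => ?_⟩
            simp [Matrix.one_apply, Fin.succ_inj]
        | succ j ihj =>
            obtain ⟨ih1, ih2⟩ := ihj
            constructor
            · intro i
              rw [pow_succ, Matrix.mul_apply, Fin.sum_univ_succ]
              have hz : ∀ l : Fin m, M l.succ 0 = 0 := fun l => by
                simpa [Fin.succ_ne_zero] using hM0 l.succ
              simp [ih1, hM00, hz, pow_succ, ite_mul]
            · intro i l
              rw [pow_succ, pow_succ, Matrix.mul_apply, Matrix.mul_apply, Fin.sum_univ_succ]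
              have h1 : (M ^ j) i.succ 0 = 0 := by
                simpa [Fin.succ_ne_zero] using ih1 i.succ
              simp [h1, ih2, hD]
      have htrM : Matrix.trace (M ^ k) = μ ^ k + Matrix.trace (D ^ k) := by
        obtain ⟨h1, h2⟩ := hpowM k
        have e1 : (M ^ k) 0 0 = μ ^ k := by simpa using h1 0
        simp [Matrix.trace, Matrix.diag, Fin.sum_univ_succ, e1, h2]
      -- charpoly factorization
      have hsub : (charmatrix M).submatrix Fin.succ Fin.succ = charmatrix D := by
        ext i l
        rcases eq_or_ne i l with rfl | hil
        · simp [Matrix.submatrix_apply, charmatrix_apply_eq, hD]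
        · have : (i.succ : Fin (m+1)) ≠ l.succ := by simpa [Fin.succ_inj] using hil
          simp [Matrix.submatrix_apply, charmatrix_apply_ne _ _ _ this,
            charmatrix_apply_ne _ _ _ hil, hD]
      have hcol : ∀ i : Fin (m+1), charmatrix M i 0 = if i = 0 then (X - C μ) else 0 := by
        intro i
        rcases eq_or_ne i 0 with rfl | hi
        · rw [charmatrix_apply_eq, hM00]; simp
        · rw [charmatrix_apply_ne _ _ _ hi]
          have : M i 0 = 0 := by simp [hM0 i, hi]
          simp [this, hi]
      have hchar : M.charpoly = (X - C μ) * D.charpoly := by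
        rw [Matrix.charpoly, Matrix.det_succ_column_zero]
        rw [Finset.sum_eq_single (0 : Fin (m+1))]
        · rw [hcol 0]
          simp only [if_pos rfl, Fin.val_zero, pow_zero, one_mul, Fin.succAbove_zero,
            if_true]
          rw [hsub, Matrix.charpoly]
        · intro i _ hi
          rw [hcol i, if_neg hi]
          ring
        · intro habs
          exact absurd (Finset.mem_univ 0) habs
      have hroots : M.charpoly.roots = μ ::ₘ D.charpoly.roots := by
        rw [hchar, Polynomial.roots_mul, Polynomial.roots_X_sub_C,
          Multiset.singleton_add]
        exact mul_ne_zero (Polynomial.X_sub_C_ne_zero μ) D.charpoly_monic.ne_zero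
      rw [← htreq k, ← hchareq, hroots, htrM, Multiset.map_cons, Multiset.sum_cons, ih D k]

-- Newton's identity for multisets
private lemma multiset_newton {F : Type*} [CommRing F] (r : Multiset F) (k : ℕ) :
    (k : F) * r.esymm k = (-1) ^ (k + 1) *
      ∑ a ∈ (antidiagonal k).filter (fun a => a.1 < k),
        (-1) ^ a.1 * r.esymm a.1 * (r.map (· ^ a.2)).sum := by
  classical
  set l := r.toList with hl
  have hr : (Finset.univ.val.map l.get : Multiset F) = r := by
    have h1 : (List.finRange l.length).map l.get = l := List.map_get_finRange l
    calc (Finset.univ.val.map l.get : Multiset F)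
        = ((List.finRange l.length).map l.get : List F) := by
          rw [Fin.univ_def]; rfl
      _ = (l : Multiset F) := by rw [h1]
      _ = r := r.coe_toList
  have key := congrArg (MvPolynomial.aeval l.get)
    (MvPolynomial.mul_esymm_eq_sum (Fin l.length) F k)
  have haes : ∀ j : ℕ, MvPolynomial.aeval l.get (MvPolynomial.esymm (Fin l.length) F j)
      = r.esymm j := by
    intro j
    rw [MvPolynomial.aeval_esymm_eq_multiset_esymm, hr]
  have haps : ∀ j : ℕ, MvPolynomial.aeval l.get (MvPolynomial.psum (Fin l.length) F j)
      = (r.map (· ^ j)).sum := by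
    intro j
    rw [MvPolynomial.psum, map_sum, ← hr, Multiset.map_map]
    simp [Finset.sum]
  simp only [_root_.map_mul, map_natCast, map_pow, map_sum, map_neg, _root_.map_one,
    haes, haps] at key
  simpa using key

-- Newton's identity for matrices over an algebraically closed field
private lemma newton_matrix_algClosed (F : Type) [Field F] [IsAlgClosed F]
    (htr : ∀ (n : ℕ) (B : Matrix (Fin n) (Fin n) F) (k : ℕ),
      Matrix.trace (B ^ k) = ((Matrix.charpoly B).roots.map (· ^ k)).sum)
    (n : ℕ) (B : Matrix (Fin n) (Fin n) F) (k : ℕ) (hk1 : 1 ≤ k) (hkn : k ≤ n) :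
    (k : F) * B.charpoly.coeff (n - k)
      + ∑ i ∈ Finset.Icc 1 k, Matrix.trace (B ^ i) * B.charpoly.coeff (n - k + i) = 0 := by
  classical
  set p := B.charpoly with hp
  have hmon : p.Monic := B.charpoly_monic
  have hdeg : p.natDegree = n := by
    rw [hp, Matrix.charpoly_natDegree_eq_dim, Fintype.card_fin]
  have hsplit : p.Splits := IsAlgClosed.splits p
  have hcard : Multiset.card p.roots = p.natDegree := (splits_iff_card_roots).1 hsplit
  set r := p.roots with hrdef
  have hcoeff : ∀ j ≤ k, p.coeff (n - k + j) = (-1) ^ (k - j) * r.esymm (k - j) := by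
    intro j hj
    have h1 : n - k + j ≤ p.natDegree := by omega
    rw [coeff_eq_esymm_roots_of_card hcard h1, hmon.leadingCoeff, one_mul]
    congr 1 <;> [skip; skip] <;> congr 1 <;> omega
  have htrace : ∀ i : ℕ, Matrix.trace (B ^ i) = (r.map (· ^ i)).sum := fun i => htr n B i
  -- rewrite the sum
  have hsum : ∑ i ∈ Finset.Icc 1 k, Matrix.trace (B ^ i) * p.coeff (n - k + i)
      = ∑ a ∈ (antidiagonal k).filter (fun a => a.1 < k),
        (-1) ^ a.1 * r.esymm a.1 * (r.map (· ^ a.2)).sum := by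
    refine Finset.sum_nbij' (fun i => (k - i, i)) (fun a => a.2) ?_ ?_ ?_ ?_ ?_
    · intro i hi
      simp only [Finset.mem_Icc] at hi
      simp only [Finset.mem_filter, Finset.HasAntidiagonal.mem_antidiagonal]
      omega
    · intro a ha
      simp only [Finset.mem_filter, Finset.HasAntidiagonal.mem_antidiagonal] at ha
      simp only [Finset.mem_Icc]
      omega
    · intro i hi
      simp only [Finset.mem_Icc] at hi
      simp
    · intro a ha
      simp only [Finset.mem_filter, Finset.HasAntidiagonal.mem_antidiagonal] at ha
      have : k - a.2 = a.1 := by omega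
      simp [this]
    · intro i hi
      simp only [Finset.mem_Icc] at hi
      rw [htrace i, hcoeff i hi.2]
      ring
  have h0 : p.coeff (n - k) = (-1) ^ k * r.esymm k := by
    simpa using hcoeff 0 (by omega)
  have hnewton := multiset_newton r k
  have hre : (k : F) * ((-1) ^ k * r.esymm k) = (-1) ^ k * ((k : F) * r.esymm k) := by ring
  rw [hsum, h0, hre, hnewton, ← mul_assoc, ← pow_add]
  have hodd : (-1 : F) ^ (k + (k + 1)) = -1 := by
    rw [show k + (k + 1) = 2 * k + 1 by ring, pow_succ, pow_mul]
    simp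
  rw [hodd]
  ring

private lemma map_newton_expr {R S : Type*} [CommRing R] [CommRing S] (φ : R →+* S)
    {n : ℕ} (B : Matrix (Fin n) (Fin n) R) (k : ℕ) :
    φ ((k : R) * B.charpoly.coeff (n - k)
        + ∑ i ∈ Finset.Icc 1 k, Matrix.trace (B ^ i) * B.charpoly.coeff (n - k + i))
      = (k : S) * (B.map φ).charpoly.coeff (n - k)
        + ∑ i ∈ Finset.Icc 1 k, Matrix.trace ((B.map φ) ^ i)
            * (B.map φ).charpoly.coeff (n - k + i) := by
  have hc : ∀ j : ℕ, (B.map φ).charpoly.coeff j = φ (B.charpoly.coeff j) := by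
    intro j; rw [Matrix.charpoly_map, Polynomial.coeff_map]
  have ht : ∀ i : ℕ, Matrix.trace ((B.map φ) ^ i) = φ (Matrix.trace (B ^ i)) := by
    intro i
    have h1 : (B.map φ) ^ i = (B ^ i).map φ := by
      have := map_pow (φ.mapMatrix) B i
      simpa [RingHom.mapMatrix_apply] using this.symm
    rw [h1, Matrix.trace, Matrix.trace, map_sum]
    simp [Matrix.diag, Matrix.map_apply]
  rw [map_add, _root_.map_mul, map_natCast, map_sum]
  simp only [_root_.map_mul, hc, ht]

private lemma newton_matrix_generic
    (hACF : ∀ (F : Type) [Field F] [IsAlgClosed F] (n : ℕ) (B : Matrix (Fin n) (Fin n) F)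
      (k : ℕ), 1 ≤ k → k ≤ n →
      (k : F) * B.charpoly.coeff (n - k)
        + ∑ i ∈ Finset.Icc 1 k, Matrix.trace (B ^ i) * B.charpoly.coeff (n - k + i) = 0)
    {K : Type*} [CommRing K] (n : ℕ) (A : Matrix (Fin n) (Fin n) K)
    (k : ℕ) (hk1 : 1 ≤ k) (hkn : k ≤ n) :
    (k : K) * A.charpoly.coeff (n - k)
      + ∑ i ∈ Finset.Icc 1 k, Matrix.trace (A ^ i) * A.charpoly.coeff (n - k + i) = 0 := by
  classical
  set R₀ := MvPolynomial (Fin n × Fin n) ℤ with hR₀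
  set Mg : Matrix (Fin n) (Fin n) R₀ := Matrix.of (fun i j => MvPolynomial.X (i, j)) with hMg
  have base : (k : R₀) * Mg.charpoly.coeff (n - k)
      + ∑ i ∈ Finset.Icc 1 k, Matrix.trace (Mg ^ i) * Mg.charpoly.coeff (n - k + i) = 0 := by
    set L := FractionRing R₀
    set F := AlgebraicClosure L
    set φ : R₀ →+* F := (algebraMap L F).comp (algebraMap R₀ L) with hφ
    have hinj : Function.Injective φ :=
      (algebraMap L F).injective.comp (IsFractionRing.injective R₀ L)
    apply hinj
    rw [map_newton_expr φ Mg k, map_zero]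
    exact hACF F n (Mg.map φ) k hk1 hkn
  set ψ : R₀ →+* K :=
    MvPolynomial.eval₂Hom (Int.castRingHom K) (fun q : Fin n × Fin n => A q.1 q.2) with hψ
  have hAmap : Mg.map ψ = A := by
    ext i j
    rw [Matrix.map_apply, hMg, hψ]
    erw [MvPolynomial.eval₂Hom_X']
  calc (k : K) * A.charpoly.coeff (n - k)
        + ∑ i ∈ Finset.Icc 1 k, Matrix.trace (A ^ i) * A.charpoly.coeff (n - k + i)
      = ψ ((k : R₀) * Mg.charpoly.coeff (n - k)
        + ∑ i ∈ Finset.Icc 1 k, Matrix.trace (Mg ^ i) * Mg.charpoly.coeff (n - k + i)) := by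
        rw [map_newton_expr ψ Mg k, hAmap]
    _ = 0 := by rw [base, map_zero]

private lemma newton_matrix {K : Type*} [CommRing K] (n : ℕ) (A : Matrix (Fin n) (Fin n) K)
    (k : ℕ) (hk1 : 1 ≤ k) (hkn : k ≤ n) :
    (k : K) * A.charpoly.coeff (n - k)
      + ∑ i ∈ Finset.Icc 1 k, Matrix.trace (A ^ i) * A.charpoly.coeff (n - k + i) = 0 := by
  refine newton_matrix_generic ?_ n A k hk1 hkn
  intro F _ _ n B k hk1 hkn
  exact newton_matrix_algClosed F (trace_pow_eq_sum_pow_roots F) n B k hk1 hkn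

theorem stmt_7 (K : Type*) [CommRing K] [Algebra ℚ K] (n : ℕ)
    (A : Matrix (Fin n) (Fin n) K)
    (h : ∀ i ∈ Finset.Icc 1 n, Matrix.trace (A ^ i) = 0) :
    Matrix.charpoly A = Polynomial.X ^ n := by
  rcases subsingleton_or_nontrivial K with hK | hK
  · exact Subsingleton.elim _ _
  have hdeg : A.charpoly.natDegree = n := by
    rw [Matrix.charpoly_natDegree_eq_dim, Fintype.card_fin]
  have hcoeff : ∀ j, j < n → A.charpoly.coeff j = 0 := by
    intro j hj
    set k := n - j with hk
    have hk1 : 1 ≤ k := by omega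
    have hkn : k ≤ n := by omega
    have hnk : n - k = j := by omega
    have key := newton_matrix n A k hk1 hkn
    rw [hnk] at key
    have hzero : ∑ i ∈ Finset.Icc 1 k, Matrix.trace (A ^ i) * A.charpoly.coeff (j + i) = 0 := by
      refine Finset.sum_eq_zero fun i hi => ?_
      rw [Finset.mem_Icc] at hi
      rw [h i (Finset.mem_Icc.mpr ⟨hi.1, hi.2.trans hkn⟩), zero_mul]
    rw [hzero, add_zero] at key
    have hunit : IsUnit (k : K) := by
      have h2 : IsUnit ((k : ℕ) : ℚ) := isUnit_iff_ne_zero.mpr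
        (Nat.cast_ne_zero.mpr (by omega))
      have h3 := h2.map (algebraMap ℚ K)
      rwa [map_natCast] at h3
    exact (hunit.mul_right_eq_zero).mp key
  ext j
  rcases lt_trichotomy j n with hj | hj | hj
  · rw [hcoeff j hj, Polynomial.coeff_X_pow, if_neg hj.ne]
  · subst hj
    have h1 := A.charpoly_monic.coeff_natDegree
    rw [hdeg] at h1
    rw [h1, Polynomial.coeff_X_pow, if_pos rfl]
  · rw [Polynomial.coeff_eq_zero_of_natDegree_lt (by rw [hdeg]; exact hj),
      Polynomial.coeff_X_pow, if_neg hj.ne']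
end

section
/- Let A be an n×n matrix over a commutative ring K whose characteristic polynomial χ_A equals t^n. Then Tr(A^i) = 0 for every positive integer i. -/
open Polynomial Matrix Finset

section Aux

variable {R : Type*} [CommRing R]

lemma aux_derivative_finset_prod {ι : Type*} [DecidableEq ι] (s : Finset ι) (f : ι → R[X]) :
    derivative (∏ i ∈ s, f i) = ∑ i ∈ s, (∏ j ∈ s.erase i, f j) * derivative (f i) := by
  induction s using Finset.induction_on with
  | empty => simp
  | @insert a s ha ih =>
    rw [Finset.prod_insert ha, derivative_mul, ih, Finset.sum_insert ha,
      Finset.erase_insert ha, Finset.mul_sum]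
    rw [mul_comm (derivative (f a))]
    congr 1
    refine Finset.sum_congr rfl fun i hi => ?_
    have hia : i ≠ a := fun h => ha (h ▸ hi)
    rw [Finset.erase_insert_of_ne hia.symm,
      Finset.prod_insert (fun h => ha (Finset.mem_of_mem_erase h)), mul_assoc]

variable {m : Type*} [DecidableEq m] [Fintype m]

lemma aux_jacobi_cols (M : Matrix m m R[X]) :
    derivative (det M) = ∑ i, det (M.updateCol i (fun j => derivative (M j i))) := by
  simp only [det_apply', map_sum, derivative_mul, derivative_intCast, zero_mul, zero_add,
    aux_derivative_finset_prod, Finset.mul_sum]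
  rw [Finset.sum_comm]
  refine Finset.sum_congr rfl fun i _ => Finset.sum_congr rfl fun σ _ => ?_
  congr 1
  rw [← Finset.mul_prod_erase Finset.univ _ (Finset.mem_univ i), updateCol_self, mul_comm]
  congr 1
  exact Finset.prod_congr rfl fun j hj => by
    rw [updateCol_apply, if_neg (Finset.ne_of_mem_erase hj)]

lemma aux_jacobi (M : Matrix m m R[X]) :
    derivative (det M) = trace (adjugate M * M.map derivative) := by
  rw [aux_jacobi_cols, Matrix.trace]
  refine Finset.sum_congr rfl fun i _ => ?_
  rw [← cramer_apply, cramer_eq_adjugate_mulVec]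
  simp [Matrix.mul_apply, Matrix.mulVec, dotProduct, Matrix.map_apply, Matrix.diag]

end Aux

set_option maxHeartbeats 1000000 in
theorem stmt_8 (K : Type*) [CommRing K] (n : ℕ)
    (A : Matrix (Fin n) (Fin n) K)
    (h : Matrix.charpoly A = Polynomial.X ^ n) :
    ∀ i : ℕ, 0 < i → Matrix.trace (A ^ i) = 0 := by
  intro i hi
  classical
  set B : Matrix (Fin n) (Fin n) K[X] := 1 - (X : K[X]) • A.map C with hB
  have hdet : det B = 1 := by
    have h1 := A.reverse_charpoly
    rw [h] at h1
    have h2 : (X ^ n : K[X]).reverse = 1 := by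
      rw [← mul_one ((X : K[X]) ^ n), Polynomial.reverse_X_pow_mul, ← Polynomial.C_1, Polynomial.reverse_C]
    rw [h2] at h1
    rw [hB]
    exact h1.symm
  have hBadj : B * adjugate B = 1 := by rw [mul_adjugate, hdet, one_smul]
  have hmapd : B.map derivative = -(A.map C) := by
    ext a b
    rcases eq_or_ne a b with rfl | hab
    · simp [hB, Matrix.map_apply, Matrix.sub_apply, Matrix.smul_apply, Matrix.one_apply,
        smul_eq_mul]
    · simp [hB, Matrix.map_apply, Matrix.sub_apply, Matrix.smul_apply, Matrix.one_apply, hab,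
        smul_eq_mul]
  have htr : trace (adjugate B * A.map C) = 0 := by
    have h0 : derivative (det B) = 0 := by rw [hdet]; simp
    rw [aux_jacobi, hmapd, Matrix.mul_neg, Matrix.trace_neg, neg_eq_zero] at h0
    exact h0
  have hgeom : ∀ N : ℕ, (∑ k ∈ Finset.range N, (X : K[X]) ^ k • (A ^ k).map C) * B
      = 1 - (X : K[X]) ^ N • (A ^ N).map C := by
    intro N
    induction N with
    | zero => simp
    | succ N ih =>
      rw [Finset.sum_range_succ, add_mul, ih]
      have hstep : ((X : K[X]) ^ N • (A ^ N).map C) * B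
          = (X : K[X]) ^ N • (A ^ N).map C - (X : K[X]) ^ (N + 1) • (A ^ (N + 1)).map C := by
        rw [hB, mul_sub, mul_one]
        congr 1
        rw [Matrix.smul_mul, Matrix.mul_smul, smul_smul, ← pow_succ,
          ← Matrix.map_mul, ← pow_succ]
      rw [hstep]
      abel
  have hadj_eq : adjugate B = (∑ k ∈ Finset.range i, (X : K[X]) ^ k • (A ^ k).map C)
      + (X : K[X]) ^ i • ((A ^ i).map C * adjugate B) := by
    have h3 : ((∑ k ∈ Finset.range i, (X : K[X]) ^ k • (A ^ k).map C) * B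
        + (X : K[X]) ^ i • (A ^ i).map C) * adjugate B = adjugate B := by
      rw [hgeom, sub_add_cancel, one_mul]
    calc adjugate B = ((∑ k ∈ Finset.range i, (X : K[X]) ^ k • (A ^ k).map C) * B
          + (X : K[X]) ^ i • (A ^ i).map C) * adjugate B := h3.symm
      _ = _ := by rw [add_mul, mul_assoc, hBadj, mul_one, Matrix.smul_mul]
  have hexp : trace (adjugate B * A.map C)
      = (∑ k ∈ Finset.range i, (X : K[X]) ^ k * C (Matrix.trace (A ^ (k + 1))))
        + (X : K[X]) ^ i * trace ((A ^ i).map C * adjugate B * A.map C) := by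
    conv_lhs => rw [hadj_eq, Matrix.add_mul, Matrix.sum_mul]
    rw [Matrix.trace_add, Matrix.trace_sum]
    congr 1
    · refine Finset.sum_congr rfl fun k _ => ?_
      rw [Matrix.smul_mul, Matrix.trace_smul, smul_eq_mul, ← Matrix.map_mul, ← pow_succ]
      congr 1
      simp [Matrix.trace, Matrix.diag, Matrix.map_apply, map_sum]
    · rw [Matrix.smul_mul, Matrix.trace_smul, smul_eq_mul]
  rw [hexp] at htr
  have hcoeff := congrArg (fun p : K[X] => p.coeff (i - 1)) htr
  simp only [Polynomial.coeff_add, Polynomial.coeff_zero] at hcoeff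
  rw [Polynomial.finset_sum_coeff] at hcoeff
  have hc1 : ∀ k ∈ Finset.range i, ((X : K[X]) ^ k * C (Matrix.trace (A ^ (k + 1)))).coeff (i - 1)
      = if i - 1 = k then Matrix.trace (A ^ (k + 1)) else 0 := by
    intro k _
    rw [mul_comm, Polynomial.coeff_C_mul, Polynomial.coeff_X_pow]
    split_ifs <;> simp
  rw [Finset.sum_congr rfl hc1, Finset.sum_ite_eq (Finset.range i) (i - 1)] at hcoeff
  rw [if_pos (Finset.mem_range.mpr (Nat.sub_lt hi Nat.one_pos))] at hcoeff
  have hc2 : ((X : K[X]) ^ i * trace ((A ^ i).map C * adjugate B * A.map C)).coeff (i - 1) = 0 := by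
    rw [mul_comm, Polynomial.coeff_mul_X_pow', if_neg (by omega)]
  rw [hc2, add_zero, Nat.sub_add_cancel hi] at hcoeff
  exact hcoeff
end

section
/- Let A, B, S be three n×n matrices over a commutative ring K such that AB = BA. Then det(AS + B) = det(SA + B). -/
open Matrix Polynomial

/-- The invertible case. -/
lemma stmt_16_aux {R : Type*} [CommRing R] {n : ℕ} (A B S : Matrix (Fin n) (Fin n) R)
    (hA : IsUnit A.det) (h : A * B = B * A) :
    Matrix.det (A * S + B) = Matrix.det (S * A + B) := by
  letI := A.invertibleOfIsUnitDet hA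
  have hc : Commute (⅟A) B := Commute.invOf_left h
  have e1 : A * S + B = A * (S + ⅟A * B) := by
    rw [mul_add, ← mul_assoc, mul_invOf_self, one_mul]
  have e2 : S * A + B = (S + B * ⅟A) * A := by
    rw [add_mul, mul_assoc, invOf_mul_self, mul_one]
  rw [e1, e2, det_mul, det_mul, hc.eq, mul_comm]

theorem stmt_16 (K : Type*) [CommRing K] (n : ℕ)
    (A B S : Matrix (Fin n) (Fin n) K) (h : A * B = B * A) :
    Matrix.det (A * S + B) = Matrix.det (S * A + B) := by
  classical
  -- work over K[X] with the matrix A' = X•1 + A, whose determinant is monic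
  set A' : Matrix (Fin n) (Fin n) K[X] := charmatrix (-A) with hA'
  have hd : (A'.det).Monic := Matrix.charpoly_monic (-A)
  -- A' commutes with B.map C
  have hcomm : A' * (B.map C) = (B.map C) * A' := by
    have hAB : ((-A).map C) * (B.map C) = (B.map C) * ((-A).map C) := by
      have h2 : (-A) * B = B * (-A) := by rw [neg_mul, mul_neg, h]
      rw [← Matrix.map_mul, ← Matrix.map_mul, h2]
    simp only [hA', charmatrix, sub_mul, mul_sub, RingHom.mapMatrix_apply, hAB,
      (Matrix.scalar_commute (X : K[X]) (fun r => Commute.all _ _) (B.map C)).eq]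
  -- localize away from det A'
  set d : K[X] := A'.det with hdd
  let L := Localization.Away d
  let ψ : K[X] →+* L := algebraMap K[X] L
  have hinj : Function.Injective ψ :=
    IsLocalization.injective L (Submonoid.powers_le.mpr hd.mem_nonZeroDivisors)
  have hu : IsUnit ((A'.map ψ).det) := by
    have h3 : IsUnit (ψ A'.det) := IsLocalization.Away.algebraMap_isUnit (S := L) d
    rwa [RingHom.map_det, RingHom.mapMatrix_apply] at h3
  have hc' : (A'.map ψ) * ((B.map C).map ψ) = ((B.map C).map ψ) * (A'.map ψ) := by
    rw [← Matrix.map_mul, ← Matrix.map_mul, hcomm]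
  have key := stmt_16_aux (A'.map ψ) ((B.map C).map ψ) ((S.map C).map ψ) hu hc'
  -- pull equality back to K[X]
  have keyR : (A' * (S.map C) + B.map C).det = ((S.map C) * A' + B.map C).det := by
    apply hinj
    rw [RingHom.map_det, RingHom.map_det]
    simp only [RingHom.mapMatrix_apply]
    rw [Matrix.map_add _ (map_add ψ), Matrix.map_add _ (map_add ψ),
      Matrix.map_mul, Matrix.map_mul]
    exact key
  -- evaluate at 0
  have hev : ∀ M : Matrix (Fin n) (Fin n) K[X],
      (Polynomial.evalRingHom (0 : K)) M.det = (M.map (Polynomial.evalRingHom (0 : K))).det :=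
    fun M => RingHom.map_det _ M
  have hAev : A'.map (Polynomial.evalRingHom (0 : K)) = A := by
    ext i j
    by_cases hij : i = j
    · subst hij
      simp [hA', charmatrix_apply_eq]
    · simp [hA', charmatrix_apply_ne _ _ _ hij]
  have hBev : (B.map C).map (Polynomial.evalRingHom (0 : K)) = B := by
    ext i j; simp
  have hSev : (S.map C).map (Polynomial.evalRingHom (0 : K)) = S := by
    ext i j; simp
  have := congrArg (Polynomial.evalRingHom (0 : K)) keyR
  rwa [hev, hev, Matrix.map_add _ (map_add (evalRingHom (0 : K))),
    Matrix.map_add _ (map_add (evalRingHom (0 : K))),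
    Matrix.map_mul, Matrix.map_mul, hAev, hBev, hSev] at this
end

section
/- Let A, B, C, D be four n×n matrices over a commutative ring K satisfying AC = CA. Then the determinant of the 2n×2n block matrix [[A, B], [C, D]] equals det(AD − CB). -/
open Matrix Polynomial

private lemma key_det (R : Type*) [CommRing R] (n : ℕ)
    (A B C D : Matrix (Fin n) (Fin n) R) (h : A * C = C * A) :
    (A.det) ^ n * (Matrix.fromBlocks A B C D).det
      = (A.det) ^ n * (A * D - C * B).det := by
  have hprod : fromBlocks (adjugate A) 0 (-C) A * fromBlocks A B C D
      = fromBlocks (A.det • (1 : Matrix (Fin n) (Fin n) R)) (adjugate A * B) 0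
          (A * D - C * B) := by
    rw [fromBlocks_multiply]
    congr 1 <;> simp [adjugate_mul, ← h, sub_eq_add_neg, add_comm]
  have h1 : (adjugate A).det * A.det = A.det ^ n := by
    rw [← det_mul, adjugate_mul, det_smul, det_one, mul_one, Fintype.card_fin]
  have hd := congrArg Matrix.det hprod
  rw [det_mul, det_fromBlocks_zero₁₂, h1, det_fromBlocks_zero₂₁, det_smul, det_one,
    mul_one, Fintype.card_fin] at hd
  exact hd

theorem stmt_17 (K : Type*) [CommRing K] (n : ℕ)
    (A B C D : Matrix (Fin n) (Fin n) K) (h : A * C = C * A) :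
    Matrix.det (Matrix.fromBlocks A B C D) = Matrix.det (A * D - C * B) := by
  set f : K →+* K[X] := Polynomial.C with hf
  set A' : Matrix (Fin n) (Fin n) K[X] := charmatrix (-A) with hA'
  have hsplit : A' = Matrix.scalar (Fin n) (X : K[X]) + A.map f := by
    ext i j
    by_cases hij : i = j <;>
      simp [hA', charmatrix, hij, hf, sub_eq_add_neg, Matrix.map_apply]
  have hA'C : A' * C.map f = C.map f * A' := by
    rw [hsplit, add_mul, mul_add]
    congr 1
    · exact (scalar_commute (X : K[X]) (fun r => Polynomial.commute_X r) _).eq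
    · rw [← Matrix.map_mul, ← Matrix.map_mul, h]
  have hkey := key_det K[X] n A' (B.map f) (C.map f) (D.map f) hA'C
  have hmonic : (A'.det) ^ n |>.Monic := (charpoly_monic (-A)).pow n
  have heq : (fromBlocks A' (B.map f) (C.map f) (D.map f)).det
      = (A' * D.map f - C.map f * B.map f).det :=
    hmonic.isRegular.left hkey
  set F : K[X] →+* K := Polynomial.evalRingHom (0 : K) with hF
  have hAev : A'.map F = A := by
    ext i j
    by_cases hij : i = j <;>
      simp [hA', charmatrix, hij, hf, hF, Matrix.map_apply]
  have hBev : (B.map f).map F = B := by ext i j; simp [hf, hF, Matrix.map_apply]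
  have hCev : (C.map f).map F = C := by ext i j; simp [hf, hF, Matrix.map_apply]
  have hDev : (D.map f).map F = D := by ext i j; simp [hf, hF, Matrix.map_apply]
  have hev := congrArg F heq
  rw [RingHom.map_det, RingHom.map_det, map_sub, _root_.map_mul, _root_.map_mul] at hev
  simp only [RingHom.mapMatrix_apply] at hev
  rwa [fromBlocks_map, hAev, hBev, hCev, hDev] at hev
end

section
/- Let A be an n×n matrix over K, D an m×m matrix over K, p an n×1 column vector, q an m×1 column vector, v a 1×m row vector, and u a 1×n row vector. Then the determinant of the (n+m)×(n+m) block matrix [[A, pv], [qu, D]] equals det A · det D − (u·adj(A)·p) · (v·adj(D)·q), where the two products u·adj(A)·p and v·adj(D)·q are 1×1 matrices identified with their unique entries. -/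
open Matrix

private lemma one_by_one_mul_aux18 {R : Type*} [CommRing R] {m : ℕ} (c : Matrix (Fin 1) (Fin 1) R)
    (M : Matrix (Fin 1) (Fin m) R) : c * M = (c 0 0) • M := by
  ext i j
  rw [Subsingleton.elim i 0]
  simp [Matrix.mul_apply, Fin.sum_univ_one]

private lemma aux18_inv {R : Type*} [CommRing R] {n m : ℕ}
    (A : Matrix (Fin n) (Fin n) R) (D : Matrix (Fin m) (Fin m) R)
    (p : Matrix (Fin n) (Fin 1) R) (q : Matrix (Fin m) (Fin 1) R)
    (v : Matrix (Fin 1) (Fin m) R) (u : Matrix (Fin 1) (Fin n) R)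
    [Invertible A] [Invertible D] :
    Matrix.det (Matrix.fromBlocks A (p * v) (q * u) D) =
      Matrix.det A * Matrix.det D -
        (u * Matrix.adjugate A * p) 0 0 * (v * Matrix.adjugate D * q) 0 0 := by
  have hD : IsUnit D.det := (isUnit_iff_isUnit_det D).1 (isUnit_of_invertible D)
  have hAd : Invertible A.det := A.detInvertibleOfInvertible
  have hDd : Invertible D.det := D.detInvertibleOfInvertible
  rw [det_fromBlocks₁₁]
  have h1 : (q * u) * ⅟A * (p * v) = q * ((u * ⅟A * p) * v) := by
    simp only [Matrix.mul_assoc]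
  rw [h1, one_by_one_mul_aux18]
  set c : R := (u * ⅟A * p) 0 0 with hc
  have h2 : D - q * (c • v) = D + q * ((-c) • v) := by
    rw [Matrix.mul_smul, Matrix.mul_smul, neg_smul, ← sub_eq_add_neg]
  rw [h2, det_add_mul _ _ hD, det_fin_one]
  have hDinv : D⁻¹ = ⅟D := (invOf_eq_nonsing_inv D).symm
  have h3 : ((-c) • v * D⁻¹ * q) = (-c) • (v * ⅟D * q) := by
    rw [hDinv, Matrix.smul_mul, Matrix.smul_mul]
  rw [h3]
  simp only [Matrix.add_apply, Matrix.smul_apply, Matrix.one_apply_eq, smul_eq_mul]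
  set e : R := (v * ⅟D * q) 0 0 with he
  have hcx : c = ⅟A.det * ((u * adjugate A * p) 0 0) := by
    rw [hc, invOf_eq, Matrix.mul_smul, Matrix.smul_mul]
    simp
  have hey : e = ⅟D.det * ((v * adjugate D * q) 0 0) := by
    rw [he, invOf_eq, Matrix.mul_smul, Matrix.smul_mul]
    simp
  rw [hcx, hey]
  have hu1 : A.det * ⅟A.det = 1 := mul_invOf_self A.det
  have hu2 : D.det * ⅟D.det = 1 := mul_invOf_self D.det
  set x := (u * adjugate A * p) 0 0
  set y := (v * adjugate D * q) 0 0
  linear_combination (-(x*y*(D.det * ⅟D.det)))*hu1 - x*y*hu2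

private lemma lhs_map_aux18 {R S : Type*} [CommRing R] [CommRing S] (f : R →+* S) {n m : ℕ}
    (A : Matrix (Fin n) (Fin n) R) (D : Matrix (Fin m) (Fin m) R)
    (p : Matrix (Fin n) (Fin 1) R) (q : Matrix (Fin m) (Fin 1) R)
    (v : Matrix (Fin 1) (Fin m) R) (u : Matrix (Fin 1) (Fin n) R) :
    Matrix.det (Matrix.fromBlocks (A.map f) (p.map f * v.map f) (q.map f * u.map f) (D.map f)) =
      f (Matrix.det (Matrix.fromBlocks A (p * v) (q * u) D)) := by
  rw [← Matrix.map_mul, ← Matrix.map_mul, ← Matrix.fromBlocks_map, RingHom.map_det,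
    RingHom.mapMatrix_apply]

private lemma rhs_map_aux18 {R S : Type*} [CommRing R] [CommRing S] (f : R →+* S) {n m : ℕ}
    (A : Matrix (Fin n) (Fin n) R) (D : Matrix (Fin m) (Fin m) R)
    (p : Matrix (Fin n) (Fin 1) R) (q : Matrix (Fin m) (Fin 1) R)
    (v : Matrix (Fin 1) (Fin m) R) (u : Matrix (Fin 1) (Fin n) R) :
    Matrix.det (A.map f) * Matrix.det (D.map f) -
        (u.map f * Matrix.adjugate (A.map f) * p.map f) 0 0 *
          (v.map f * Matrix.adjugate (D.map f) * q.map f) 0 0 =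
      f (Matrix.det A * Matrix.det D -
        (u * Matrix.adjugate A * p) 0 0 * (v * Matrix.adjugate D * q) 0 0) := by
  have hadjA : Matrix.adjugate (A.map f) = (Matrix.adjugate A).map f :=
    (f.map_adjugate A).symm
  have hadjD : Matrix.adjugate (D.map f) = (Matrix.adjugate D).map f :=
    (f.map_adjugate D).symm
  rw [hadjA, hadjD, ← Matrix.map_mul, ← Matrix.map_mul, ← Matrix.map_mul, ← Matrix.map_mul,
    map_sub, _root_.map_mul, _root_.map_mul, RingHom.map_det, RingHom.map_det,
    RingHom.mapMatrix_apply, RingHom.mapMatrix_apply]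
  rfl

theorem stmt_18 (K : Type*) [CommRing K] (n m : ℕ)
    (A : Matrix (Fin n) (Fin n) K) (D : Matrix (Fin m) (Fin m) K)
    (p : Matrix (Fin n) (Fin 1) K) (q : Matrix (Fin m) (Fin 1) K)
    (v : Matrix (Fin 1) (Fin m) K) (u : Matrix (Fin 1) (Fin n) K) :
    Matrix.det (Matrix.fromBlocks A (p * v) (q * u) D) =
      Matrix.det A * Matrix.det D -
        (u * Matrix.adjugate A * p) 0 0 * (v * Matrix.adjugate D * q) 0 0 := by
  classical
  set R := Polynomial K
  set gA : Matrix (Fin n) (Fin n) R :=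
    A.map Polynomial.C + (Polynomial.X : R) • 1 with hgA
  set gD : Matrix (Fin m) (Fin m) R :=
    D.map Polynomial.C + (Polynomial.X : R) • 1 with hgD
  have hMA : (gA.det).Monic := by
    rw [Polynomial.Monic.def, hgA, add_comm]
    exact Polynomial.leadingCoeff_det_X_one_add_C A
  have hMD : (gD.det).Monic := by
    rw [Polynomial.Monic.def, hgD, add_comm]
    exact Polynomial.leadingCoeff_det_X_one_add_C D
  set S : Submonoid R := Submonoid.closure {gA.det, gD.det} with hSdef
  have hS : S ≤ nonZeroDivisors R := by
    rw [hSdef, Submonoid.closure_le]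
    rintro x (rfl | rfl)
    · exact hMA.mem_nonZeroDivisors
    · exact hMD.mem_nonZeroDivisors
  set L := Localization S
  set f : R →+* L := algebraMap R L with hfdef
  have hf : Function.Injective f := IsLocalization.injective L hS
  have hmemA : gA.det ∈ S := Submonoid.subset_closure (Set.mem_insert _ _)
  have hmemD : gD.det ∈ S := Submonoid.subset_closure (Set.mem_insert_iff.mpr (Or.inr rfl))
  have hUA : IsUnit ((gA.map f).det) := by
    rw [← RingHom.mapMatrix_apply, ← RingHom.map_det]
    exact IsLocalization.map_units L (⟨gA.det, hmemA⟩ : S)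
  have hUD : IsUnit ((gD.map f).det) := by
    rw [← RingHom.mapMatrix_apply, ← RingHom.map_det]
    exact IsLocalization.map_units L (⟨gD.det, hmemD⟩ : S)
  haveI : Invertible (gA.map f) := (gA.map f).invertibleOfIsUnitDet hUA
  haveI : Invertible (gD.map f) := (gD.map f).invertibleOfIsUnitDet hUD
  set p' : Matrix (Fin n) (Fin 1) R := p.map Polynomial.C
  set q' : Matrix (Fin m) (Fin 1) R := q.map Polynomial.C
  set v' : Matrix (Fin 1) (Fin m) R := v.map Polynomial.C
  set u' : Matrix (Fin 1) (Fin n) R := u.map Polynomial.C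
  have hR : Matrix.det (Matrix.fromBlocks gA (p' * v') (q' * u') gD) =
      Matrix.det gA * Matrix.det gD -
        (u' * Matrix.adjugate gA * p') 0 0 * (v' * Matrix.adjugate gD * q') 0 0 := by
    apply hf
    rw [← lhs_map_aux18 f gA gD p' q' v' u', ← rhs_map_aux18 f gA gD p' q' v' u']
    exact aux18_inv (gA.map f) (gD.map f) (p'.map f) (q'.map f) (v'.map f) (u'.map f)
  set ev : R →+* K := Polynomial.evalRingHom 0 with hev
  have hevC : ∀ a : K, ev (Polynomial.C a) = a := fun a => Polynomial.eval_C
  have hevX : ev Polynomial.X = 0 := Polynomial.eval_X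
  have hA0 : gA.map ev = A := by
    ext i j
    by_cases h : i = j <;>
      simp [hgA, Matrix.map_apply, Matrix.add_apply, Matrix.smul_apply, Matrix.one_apply, h, hevC, hevX]
  have hD0 : gD.map ev = D := by
    ext i j
    by_cases h : i = j <;>
      simp [hgD, Matrix.map_apply, Matrix.add_apply, Matrix.smul_apply, Matrix.one_apply, h, hevC, hevX]
  have hp0 : p'.map ev = p := by ext i j; simp [Matrix.map_apply, hevC, p']
  have hq0 : q'.map ev = q := by ext i j; simp [Matrix.map_apply, hevC, q']
  have hv0 : v'.map ev = v := by ext i j; simp [Matrix.map_apply, hevC, v']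
  have hu0 : u'.map ev = u := by ext i j; simp [Matrix.map_apply, hevC, u']
  have g1 := lhs_map_aux18 ev gA gD p' q' v' u'
  have g2 := rhs_map_aux18 ev gA gD p' q' v' u'
  rw [hA0, hD0, hp0, hq0, hv0, hu0] at g1 g2
  rw [g1, congrArg ev hR, ← g2]
end

section
/- Let A be an n×n matrix over a commutative ring K and k ∈ ℕ such that A^{k+1} = 0. Then (Tr A)^{nk+1} = 0 (Almkvist's theorem). -/
open Matrix Finset

section aux
variable {K : Type*} [CommRing K] {n : ℕ}

private noncomputable def almF (A : Matrix (Fin n) (Fin n) K) :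
    MultilinearMap K (fun _ : Fin n => Fin n → K) K :=
  ∑ j : Fin n, (Matrix.detRowAlternating (R := K) (n := Fin n)).toMultilinearMap.compLinearMap
    (Function.update (fun _ : Fin n => (LinearMap.id : (Fin n → K) →ₗ[K] Fin n → K))
      j A.vecMulLinear)

private lemma almF_apply (A : Matrix (Fin n) (Fin n) K) (w : Fin n → Fin n → K) :
    almF A w = ∑ j : Fin n, det (Matrix.of (Function.update w j (w j ᵥ* A))) := by
  simp only [almF, MultilinearMap.sum_apply, MultilinearMap.compLinearMap_apply]
  refine Finset.sum_congr rfl fun j _ => ?_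
  have : (fun i => Function.update (fun _ : Fin n => (LinearMap.id : (Fin n → K) →ₗ[K] Fin n → K))
      j A.vecMulLinear i (w i)) = Function.update w j (w j ᵥ* A) := by
    funext i
    by_cases hij : i = j
    · subst hij; simp
    · simp [Function.update_of_ne hij]
  rw [this]
  rfl

private lemma almF_eq_zero (A : Matrix (Fin n) (Fin n) K) (w : Fin n → Fin n → K)
    {i j : Fin n} (hw : w i = w j) (hij : i ≠ j) : almF A w = 0 := by
  rw [almF_apply]
  rw [← Finset.add_sum_erase _ _ (Finset.mem_univ i),
      ← Finset.add_sum_erase _ _ (Finset.mem_erase.2 ⟨hij.symm, Finset.mem_univ j⟩)]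
  have h3 : ∑ l ∈ (univ.erase i).erase j, det (Matrix.of (Function.update w l (w l ᵥ* A))) = 0 := by
    refine Finset.sum_eq_zero fun l hl => ?_
    obtain ⟨hlj, hli, -⟩ : l ≠ j ∧ l ≠ i ∧ True := by
      simpa [Finset.mem_erase] using hl
    refine Matrix.det_zero_of_row_eq hij ?_
    show Function.update w l (w l ᵥ* A) i = Function.update w l (w l ᵥ* A) j
    rw [Function.update_of_ne (Ne.symm hli), Function.update_of_ne (Ne.symm hlj), hw]
  rw [h3, add_zero]
  have key : Matrix.of (Function.update w j (w j ᵥ* A)) =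
      (Matrix.of (Function.update w i (w i ᵥ* A))).submatrix (Equiv.swap j i) id := by
    ext a b
    simp only [submatrix_apply, id_eq, of_apply]
    rcases eq_or_ne a i with rfl | hai
    · rw [Equiv.swap_apply_right, Function.update_of_ne hij, Function.update_of_ne (Ne.symm hij)]
      exact congrFun hw b
    rcases eq_or_ne a j with rfl | haj
    · rw [Equiv.swap_apply_left, Function.update_self, Function.update_self, hw]
    · rw [Equiv.swap_apply_of_ne_of_ne haj hai, Function.update_of_ne haj,
        Function.update_of_ne hai]
  rw [key, Matrix.det_permute, Equiv.Perm.sign_swap (Ne.symm hij)]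
  push_cast
  ring

private noncomputable def almFalt (A : Matrix (Fin n) (Fin n) K) :
    (Fin n → K) [⋀^Fin n]→ₗ[K] K :=
  { almF A with map_eq_zero_of_eq' := fun w i j hw hij => almF_eq_zero A w hw hij }

private lemma trace_mul_det (A : Matrix (Fin n) (Fin n) K) (w : Fin n → Fin n → K) :
    trace A * det (Matrix.of w) =
      ∑ j : Fin n, det (Matrix.of (Function.update w j (w j ᵥ* A))) := by
  have h := (almFalt A).eq_smul_basis_det (Pi.basisFun K (Fin n))
  have hw := congrFun (congrArg DFunLike.coe h) w
  have hbasis : almFalt A (Pi.basisFun K (Fin n)) = trace A := by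
    show almF A (Pi.basisFun K (Fin n)) = trace A
    rw [almF_apply]
    have hone : ∀ i : Fin n, (Pi.basisFun K (Fin n) : Fin n → Fin n → K) i
        = (1 : Matrix (Fin n) (Fin n) K) i := by
      intro i; funext j; simp [Matrix.one_apply, Pi.single_apply, eq_comm]
    have h2 : ∀ j : Fin n,
        Matrix.of (Function.update (fun i => (Pi.basisFun K (Fin n) : Fin n → Fin n → K) i) j
          ((Pi.basisFun K (Fin n) : Fin n → Fin n → K) j ᵥ* A)) =
        (1 : Matrix (Fin n) (Fin n) K).updateRow j (A j) := by
      intro j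
      ext a b
      rcases eq_or_ne a j with rfl | haj
      · simp only [of_apply, Function.update_self, updateRow_self]
        rw [hone]
        simp [Matrix.vecMul, Matrix.one_apply, dotProduct]
      · simp only [of_apply, Function.update_of_ne haj, Matrix.updateRow_ne haj]
        rw [hone]
    simp_rw [h2]
    have hdet : ∀ j : Fin n, ((1 : Matrix (Fin n) (Fin n) K).updateRow j (A j)).det = A j j := by
      intro j
      have := Matrix.cramer_transpose_apply (1 : Matrix (Fin n) (Fin n) K) (A j) j
      rw [Matrix.transpose_one, Matrix.cramer_one] at this
      simpa using this.symm
    simp_rw [hdet]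
    rfl
  rw [hbasis] at hw
  rw [AlternatingMap.smul_apply, smul_eq_mul, Pi.basisFun_det] at hw
  rw [← almF_apply]
  exact hw.symm

private lemma key_induction (A : Matrix (Fin n) (Fin n) K) (N : ℕ) (m : Fin n → ℕ) :
    trace A ^ N * det (Matrix.of fun i j => (A ^ m i) i j) =
      ∑ f : Fin N → Fin n, det (Matrix.of fun i j =>
        (A ^ (m i + (univ.filter fun x => f x = i).card)) i j) := by
  induction N generalizing m with
  | zero =>
    simp only [pow_zero, one_mul]
    have hval : ∀ f : Fin 0 → Fin n,
        (Matrix.of fun i j => (A ^ (m i + (univ.filter fun x => f x = i).card)) i j)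
        = Matrix.of fun i j => (A ^ m i) i j := by
      intro f
      ext i j
      have he : (univ.filter fun x => f x = i) = ∅ := Finset.eq_empty_of_isEmpty _
      simp [he]
    simp_rw [hval]
    rw [Finset.sum_const]
    simp
  | succ N ih =>
    have step : trace A ^ (N + 1) * det (Matrix.of fun i j => (A ^ m i) i j)
        = trace A * ∑ f : Fin N → Fin n, det (Matrix.of fun i j =>
            (A ^ (m i + (univ.filter fun x => f x = i).card)) i j) := by
      rw [← ih, pow_succ]; ring
    rw [step, Finset.mul_sum]
    have L : ∀ m' : Fin n → ℕ,
        trace A * det (Matrix.of fun i j => (A ^ m' i) i j) =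
          ∑ j : Fin n, det (Matrix.of fun i j' =>
            (A ^ Function.update m' j (m' j + 1) i) i j') := by
      intro m'
      rw [trace_mul_det A (fun i j => (A ^ m' i) i j)]
      refine Finset.sum_congr rfl fun j _ => ?_
      congr 1
      ext a b
      rcases eq_or_ne a j with rfl | haj
      · simp only [of_apply, Function.update_self]
        rw [pow_succ]
        simp [Matrix.vecMul, Matrix.mul_apply, dotProduct]
      · simp [Function.update_of_ne haj]
    simp_rw [L]
    have hcount : ∀ (j : Fin n) (f : Fin N → Fin n) (i : Fin n),
        (univ.filter fun x => (Fin.cons j f : Fin (N+1) → Fin n) x = i).card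
          = (univ.filter fun x => f x = i).card + if j = i then 1 else 0 := by
      intro j f i
      simp only [Finset.card_filter]
      rw [Fin.sum_univ_succ]
      simp [add_comm]
    have hsum : ∑ f' : Fin (N + 1) → Fin n, det (Matrix.of fun i j =>
          (A ^ (m i + (univ.filter fun x => f' x = i).card)) i j)
        = ∑ p : Fin n × (Fin N → Fin n), det (Matrix.of fun i j =>
          (A ^ (m i + (univ.filter fun x => (Fin.cons p.1 p.2 : Fin (N+1) → Fin n) x = i).card)) i j) := by
      rw [← (Fin.consEquiv (fun _ : Fin (N+1) => Fin n)).sum_comp]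
      refine Finset.sum_congr rfl fun p _ => ?_
      rfl
    rw [hsum, Fintype.sum_prod_type, Finset.sum_comm]
    refine Finset.sum_congr rfl fun j _ => Finset.sum_congr rfl fun f _ => ?_
    have hexp : Function.update (fun i => m i + (univ.filter fun x => f x = i).card) j
        ((fun i => m i + (univ.filter fun x => f x = i).card) j + 1)
        = fun i => m i + (univ.filter fun x => (Fin.cons j f : Fin (N+1) → Fin n) x = i).card := by
      funext i
      rw [hcount]
      rcases eq_or_ne i j with rfl | hij
      · simp [add_assoc]
      · simp [Function.update_of_ne hij, Ne.symm hij]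
    simp only [hexp]
end aux

theorem stmt_19 (K : Type*) [CommRing K] (n k : ℕ)
    (A : Matrix (Fin n) (Fin n) K) (h : A ^ (k + 1) = 0) :
    (Matrix.trace A) ^ (n * k + 1) = 0 := by
  have hkey := key_induction A (n * k + 1) 0
  have hId : det (Matrix.of fun i j => (A ^ (0 : Fin n → ℕ) i) i j) = 1 := by
    have : (Matrix.of fun i j => (A ^ (0 : Fin n → ℕ) i) i j) = 1 := by
      ext i j; simp [Matrix.one_apply]
    rw [this, Matrix.det_one]
  rw [hId, mul_one] at hkey
  rw [hkey]
  refine Finset.sum_eq_zero fun f _ => ?_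
  have hpigeon : ∃ i : Fin n, k + 1 ≤ (univ.filter fun x => f x = i).card := by
    by_contra hc
    push_neg at hc
    have hsum : ∑ i : Fin n, (univ.filter fun x => f x = i).card
        = n * k + 1 := by
      rw [← Finset.card_eq_sum_card_fiberwise (f := f) (fun x _ => Finset.mem_univ (f x))]
      simp
    have hle : ∑ i : Fin n, (univ.filter fun x => f x = i).card ≤ ∑ _i : Fin n, k :=
      Finset.sum_le_sum fun i _ => Nat.lt_succ_iff.mp (hc i)
    simp only [Finset.sum_const, Finset.card_univ, Fintype.card_fin, smul_eq_mul] at hle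
    omega
  obtain ⟨i, hi⟩ := hpigeon
  refine Matrix.det_eq_zero_of_row_eq_zero i fun j => ?_
  have hz : A ^ (univ.filter fun x => f x = i).card = 0 := by
    refine pow_eq_zero_of_le ?_ h
    simpa using hi
  simp [hz]
end
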